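/- arXiv:1408.0448 — 2 statements merged into one kernel-verified Lean document; each statement's English description precedes it below -/
import Mathlib

section
/- Let g be a 2-step nilpotent Lie algebra with abelian complex structure whose center c has real dimension 2 (so c^{1,0} is 1-dimensional), with splitting g^{1,0} = t^{1,0} ⊕ c^{1,0}. Let Λ = Λ₁ + Λ₂ ∈ Λ²g^{1,0} with Λ₁ ∈ c^{1,0} ∧ t^{1,0} and Λ₂ ∈ Λ²t^{1,0}. Then ad_Λ([[Λ, -]] via the Schouten bracket) annihilates all of g^{1,0}, annihilates t^{*(0,1)}, and maps c^{*(0,1)} into t^{*(0,1)} ⊗ g^{1,0}; more precisely ad_{Λ₁}(c^{*(0,1)}) ⊆ t^{*(0,1)} ⊗ c^{1,0} and ad_{Λ₂}(c^{*(0,1)}) ⊆ t^{*(0,1)} ⊗ t^{1,0}. -/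
open TensorProduct

/-- The Lie derivative `[[v, ρ̄]] = L_v ρ̄ = -ι_v dρ̄` of an invariant
`(0,1)`-form `ρ̄` along `v ∈ g^{1,0}`, computed from the structure constants:
`(L_v ρ̄)(s̄) = -ρ̄( pr_{c^{0,1}} [v, s̄] )`.  Here `g^{1,0} = t^{1,0} ⊕ c^{1,0}`,
`g^{0,1} = t^{0,1} ⊕ c^{0,1}` and `β` is the bracket `[g^{1,0}, g^{0,1}] ⊆ c_ℂ`. -/
noncomputable def lieDer {T10 C10 T01 C01 : Type}
    [AddCommGroup T10] [Module ℂ T10] [AddCommGroup C10] [Module ℂ C10]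
    [AddCommGroup T01] [Module ℂ T01] [AddCommGroup C01] [Module ℂ C01]
    (β : (T10 × C10) →ₗ[ℂ] (T01 × C01) →ₗ[ℂ] (C10 × C01))
    (v : T10 × C10) (ρ : Module.Dual ℂ (T01 × C01)) :
    Module.Dual ℂ (T01 × C01) :=
  -(ρ ∘ₗ (LinearMap.inr ℂ T01 C01) ∘ₗ (LinearMap.snd ℂ C10 C01) ∘ₗ (β v))

/-- Let `g` be 2-step nilpotent with abelian complex structure,
center `c` of real dimension 2 (so `c^{1,0}` is 1-dimensional), and splitting
`g^{1,0} = t^{1,0} ⊕ c^{1,0}`.  Let `Λ = Λ₁ + Λ₂` with `Λ₁ = W ∧ T ∈ c^{1,0} ∧ t^{1,0}`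
and `Λ₂ = Σ_i U_i ∧ U'_i ∈ Λ²t^{1,0}`.  Then `ad_Λ = [[Λ, -]]` annihilates
`g^{1,0}` (since `g^{1,0}` is abelian) and `t^{*(0,1)}`, while
`ad_{Λ₁}(c^{*(0,1)}) ⊆ t^{*(0,1)} ⊗ c^{1,0}` and
`ad_{Λ₂}(c^{*(0,1)}) ⊆ t^{*(0,1)} ⊗ t^{1,0}`. -/
theorem statement13 (T10 C10 T01 C01 : Type)
    [AddCommGroup T10] [Module ℂ T10] [AddCommGroup C10] [Module ℂ C10]
    [AddCommGroup T01] [Module ℂ T01] [AddCommGroup C01] [Module ℂ C01]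
    [FiniteDimensional ℂ T10] [FiniteDimensional ℂ C10]
    [FiniteDimensional ℂ T01] [FiniteDimensional ℂ C01]
    -- the center c^{1,0} is one-dimensional
    (hdim : Module.finrank ℂ C10 = 1)
    -- the bracket [g^{1,0}, g^{0,1}] ⊆ c^{1,0} ⊕ c^{0,1}; only [t^{1,0}, t^{0,1}]
    -- is nonzero
    (β : (T10 × C10) →ₗ[ℂ] (T01 × C01) →ₗ[ℂ] (C10 × C01))
    (hβ : ∀ (v : T10 × C10) (s : T01 × C01), β v s = β (v.1, 0) (s.1, 0))
    -- the bracket of g^{1,0} with itself vanishes (abelian complex structure)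
    (γ : (T10 × C10) →ₗ[ℂ] (T10 × C10) →ₗ[ℂ] (T10 × C10))
    (hγ : ∀ v w, γ v w = 0)
    -- the Poisson bivector Λ = Λ₁ + Λ₂, Λ₁ = W ∧ T, Λ₂ = Σ_i U_i ∧ U'_i
    (W : C10) (T : T10) (N : ℕ) (U U' : Fin N → T10) :
    -- (i) ad_Λ annihilates g^{1,0}:  [[Λ, v]] = 0 (computed via the
    -- biderivation formula from the trivial bracket γ of g^{1,0})
    (∀ v : T10 × C10,
      (((0 : T10), W) ⊗ₜ[ℂ] (γ (T, (0 : C10)) v) - (T, (0 : C10)) ⊗ₜ[ℂ] (γ ((0 : T10), W) v))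
      + ∑ i, ((U i, (0 : C10)) ⊗ₜ[ℂ] (γ (U' i, (0 : C10)) v)
          - (U' i, (0 : C10)) ⊗ₜ[ℂ] (γ (U i, (0 : C10)) v)) = 0) ∧
    -- (ii) ad_Λ annihilates t^{*(0,1)}
    (∀ ρ : Module.Dual ℂ (T01 × C01), (∀ w : C01, ρ (0, w) = 0) →
      ((lieDer β (T, (0 : C10)) ρ) ⊗ₜ[ℂ] (((0 : T10), W) : T10 × C10)
        - (lieDer β ((0 : T10), W) ρ) ⊗ₜ[ℂ] ((T, (0 : C10)) : T10 × C10))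
      + ∑ i, ((lieDer β (U i, (0 : C10)) ρ) ⊗ₜ[ℂ] ((U' i, (0 : C10)) : T10 × C10)
          - (lieDer β (U' i, (0 : C10)) ρ) ⊗ₜ[ℂ] ((U i, (0 : C10)) : T10 × C10)) = 0) ∧
    -- (iii) ad_{Λ₁}(c^{*(0,1)}) ⊆ t^{*(0,1)} ⊗ c^{1,0}
    (∀ ρ : Module.Dual ℂ (T01 × C01), (∀ s : T01, ρ (s, 0) = 0) →
      ((lieDer β (T, (0 : C10)) ρ) ⊗ₜ[ℂ] (((0 : T10), W) : T10 × C10)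
        - (lieDer β ((0 : T10), W) ρ) ⊗ₜ[ℂ] ((T, (0 : C10)) : T10 × C10))
      ∈ Submodule.span ℂ {x | ∃ (α : Module.Dual ℂ (T01 × C01)) (w : C10),
          (∀ u : C01, α (0, u) = 0) ∧ x = α ⊗ₜ[ℂ] (((0 : T10), w) : T10 × C10)}) ∧
    -- (iv) ad_{Λ₂}(c^{*(0,1)}) ⊆ t^{*(0,1)} ⊗ t^{1,0}
    (∀ ρ : Module.Dual ℂ (T01 × C01), (∀ s : T01, ρ (s, 0) = 0) →
      (∑ i, ((lieDer β (U i, (0 : C10)) ρ) ⊗ₜ[ℂ] ((U' i, (0 : C10)) : T10 × C10)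
          - (lieDer β (U' i, (0 : C10)) ρ) ⊗ₜ[ℂ] ((U i, (0 : C10)) : T10 × C10)))
      ∈ Submodule.span ℂ {x | ∃ (α : Module.Dual ℂ (T01 × C01)) (u : T10),
          (∀ w : C01, α (0, w) = 0) ∧ x = α ⊗ₜ[ℂ] ((u, (0 : C10)) : T10 × C10)}) := by
  
  refine ⟨?_, ?_, ?_, ?_⟩
  · intro v; simp [hγ]
  · intro ρ hρ
    have key : ∀ v : T10 × C10, lieDer β v ρ = 0 := by
      intro v
      refine LinearMap.ext fun s => ?_
      simp only [lieDer, LinearMap.neg_apply, LinearMap.comp_apply,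
        LinearMap.snd_apply, LinearMap.inr_apply, LinearMap.zero_apply]
      rw [hρ]; ring
    simp [key]
  · intro ρ hρ
    have h2 : lieDer β ((0 : T10), W) ρ = 0 := by
      refine LinearMap.ext fun s => ?_
      simp only [lieDer, LinearMap.neg_apply, LinearMap.comp_apply,
        LinearMap.snd_apply, LinearMap.inr_apply, LinearMap.zero_apply]
      rw [hβ]
      have : ((((0 : T10), W) : T10 × C10).1, (0 : C10)) = (0 : T10 × C10) := by simp
      rw [this]
      simp; exact map_zero ρ
    rw [h2]
    simp only [TensorProduct.zero_tmul, sub_zero]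
    apply Submodule.subset_span
    refine ⟨lieDer β (T, (0 : C10)) ρ, W, ?_, rfl⟩
    intro u
    simp only [lieDer, LinearMap.neg_apply, LinearMap.comp_apply,
      LinearMap.snd_apply, LinearMap.inr_apply]
    rw [hβ]
    have : (((0 : T01), u) : T01 × C01).1 = (0 : T01) := rfl
    rw [this]
    have h0 : β ((T, (0 : C10)) : T10 × C10) (((0 : T01), (0 : C01)) : T01 × C01) = 0 := by
      exact map_zero (β (T, (0 : C10)))
    rw [h0]
    simp [hρ]
  · intro ρ hρ
    apply Submodule.sum_mem
    intro i _
    have mem : ∀ u u' : T10,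
        (lieDer β (u, (0 : C10)) ρ) ⊗ₜ[ℂ] ((u', (0 : C10)) : T10 × C10)
        ∈ Submodule.span ℂ {x | ∃ (α : Module.Dual ℂ (T01 × C01)) (w : T10),
            (∀ w : C01, α (0, w) = 0) ∧ x = α ⊗ₜ[ℂ] ((w, (0 : C10)) : T10 × C10)} := by
      intro u u'
      apply Submodule.subset_span
      refine ⟨lieDer β (u, (0 : C10)) ρ, u', ?_, rfl⟩
      intro w
      simp only [lieDer, LinearMap.neg_apply, LinearMap.comp_apply,
        LinearMap.snd_apply, LinearMap.inr_apply]
      rw [hβ]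
      have : (((0 : T01), w) : T01 × C01).1 = (0 : T01) := rfl
      rw [this]
      have h0 : β ((u, (0 : C10)) : T10 × C10) (((0 : T01), (0 : C01)) : T01 × C01) = 0 := by
        exact map_zero (β (u, (0 : C10)))
      rw [h0]
      simp [hρ]
    exact Submodule.sub_mem _ (mem (U i) (U' i)) (mem (U' i) (U i))
end

section
/- In the setting of a 2-step nilmanifold with abelian complex structure and 2-dimensional center, with invariant Poisson bivector Λ = Λ₁ + Λ₂ as above, the differential d₂ of the Poisson spectral sequence vanishes identically: for every class A ∈ Λ^q(g^{*(0,1)}) ⊗ Λ^p g^{1,0} with ∂̄A = 0 and ad_Λ A = ∂̄B for some B, the element ad_Λ B is ∂̄-exact (in fact ad_Λ B = 0 for a suitable choice of B). -/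
open DFinsupp in
lemma aux_disjoint_biSup {ι N : Type*} [DecidableEq ι] [AddCommGroup N] [Module ℂ N]
    (S : ι → Submodule ℂ N) (hind : iSupIndep S) (p q : ι → Prop) [DecidablePred p]
    [DecidablePred q] (hpq : ∀ i, ¬(p i ∧ q i)) :
    Disjoint (⨆ i, ⨆ _ : p i, S i) (⨆ i, ⨆ _ : q i, S i) := by
  rw [Submodule.disjoint_def]
  intro x hx hy
  obtain ⟨f, hf⟩ := (Submodule.mem_biSup_iff_exists_dfinsupp p S x).mp hx
  obtain ⟨g, hg⟩ := (Submodule.mem_biSup_iff_exists_dfinsupp q S x).mp hy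
  have hinj := hind.dfinsupp_lsum_injective
  have heq : f.filter p = g.filter q := hinj (hf.trans hg.symm)
  have hz : f.filter p = 0 := by
    ext i
    have h1 : (f.filter p) i = (g.filter q) i := by rw [heq]
    simp only [DFinsupp.filter_apply, DFinsupp.zero_apply] at h1 ⊢
    by_cases hp : p i
    · have hq : ¬ q i := fun h => hpq i ⟨hp, h⟩
      simp only [hp, hq, if_true, if_false, if_pos, if_neg, not_false_iff] at h1 ⊢
      simpa using h1
    · simp [hp]
  rw [hz] at hf
  simpa using hf.symm

/-- Setting of Theorem 2 of the paper: a 2-step nilmanifold with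
abelian complex structure and 2-dimensional center, with invariant holomorphic
Poisson bivector `Λ = Λ₁ + Λ₂`.  The invariant complex `V` decomposes into
components `C a b k ℓ` standing for `t^{*(0,a)} ⊗ c^{*(0,b)} ⊗ t^{k,0} ⊗ c^{ℓ,0}`
(vanishing when `b ≥ 2` or `ℓ ≥ 2` as `c^{1,0}` is one-dimensional); `∂̄` maps
`(a,b;k,ℓ)` into `(a+1,b;k-1,ℓ+1)`, `ad_{Λ₁}` maps `(a,b;k,ℓ)` into
`(a+1,b-1;k,ℓ+1)` and `ad_{Λ₂}` maps `(a,b;k,ℓ)` into `(a+1,b-1;k+1,ℓ)`.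
Then `d₂` of the Poisson spectral sequence vanishes identically: whenever
`x` has bidegree `(p,q)`, `∂̄x = 0`, and `ad_Λ x = ∂̄B` for some `B` of bidegree
`(p+1,q-1)`, there is a choice `B'` with `ad_Λ x = ∂̄B'` and `ad_Λ B' = 0`. -/
theorem statement14 (V : Type) [AddCommGroup V] [Module ℂ V]
    (C : ℕ → ℕ → ℕ → ℕ → Submodule ℂ V)
    -- the components give a direct sum decomposition of V
    (hinternal : DirectSum.IsInternal
      (fun i : ℕ × ℕ × ℕ × ℕ => C i.1 i.2.1 i.2.2.1 i.2.2.2))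
    -- c^{1,0} is one-dimensional: components with b ≥ 2 or ℓ ≥ 2 vanish
    (hvan : ∀ a b k l, 2 ≤ b ∨ 2 ≤ l → C a b k l = ⊥)
    -- the operators ∂̄, ad_{Λ₁}, ad_{Λ₂}
    (db A1 A2 : V →ₗ[ℂ] V)
    (hdb : ∀ a b k l, (C a b (k+1) l).map db ≤ C (a+1) b k (l+1))
    (hdb0 : ∀ a b l, (C a b 0 l).map db = ⊥)
    (hA1 : ∀ a b k l, (C a (b+1) k l).map A1 ≤ C (a+1) b k (l+1))
    (hA10 : ∀ a k l, (C a 0 k l).map A1 = ⊥)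
    (hA2 : ∀ a b k l, (C a (b+1) k l).map A2 ≤ C (a+1) b (k+1) l)
    (hA20 : ∀ a k l, (C a 0 k l).map A2 = ⊥)
    -- double complex identities for ∂̄ and ad_Λ = ad_{Λ₁} + ad_{Λ₂}
    (hdbdb : ∀ x : V, db (db x) = 0)
    (hadad : ∀ x : V, A1 (A1 x) + A1 (A2 x) + A2 (A1 x) + A2 (A2 x) = 0)
    (hanti : ∀ x : V, db (A1 x) + db (A2 x) + A1 (db x) + A2 (db x) = 0) :
    -- d₂ ≡ 0:
    ∀ p q : ℕ, ∀ x : V,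
      x ∈ (⨆ (a : ℕ) (b : ℕ) (k : ℕ) (l : ℕ)
            (_ : a + b = q + 1 ∧ k + l = p), C a b k l) →
      db x = 0 →
      ∀ B : V,
        B ∈ (⨆ (a : ℕ) (b : ℕ) (k : ℕ) (l : ℕ)
              (_ : a + b = q ∧ k + l = p + 1), C a b k l) →
        A1 x + A2 x = db B →
        ∃ B' : V,
          B' ∈ (⨆ (a : ℕ) (b : ℕ) (k : ℕ) (l : ℕ)
                (_ : a + b = q ∧ k + l = p + 1), C a b k l) ∧
          A1 x + A2 x = db B' ∧ A1 B' + A2 B' = 0 := by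
  classical
  intro p q x hx hdbx B hB hadB
  set C' : ℕ × ℕ × ℕ × ℕ → Submodule ℂ V :=
    (fun i : ℕ × ℕ × ℕ × ℕ => C i.1 i.2.1 i.2.2.1 i.2.2.2) with hC'
  -- rewriting of nested sups
  have hsup : ∀ P : ℕ × ℕ × ℕ × ℕ → Prop,
      (⨆ (a : ℕ) (b : ℕ) (k : ℕ) (l : ℕ) (_ : P (a,b,k,l)), C a b k l)
        = ⨆ i, ⨆ _ : P i, C' i := by
    intro P
    simp only [iSup_prod]
    rfl
  have hind : iSupIndep C' := hinternal.submodule_iSupIndep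
  -- predicates
  set Px : ℕ × ℕ × ℕ × ℕ → Prop :=
    fun i => i.1 + i.2.1 = q + 1 ∧ i.2.2.1 + i.2.2.2 = p with hPx
  set PB : ℕ × ℕ × ℕ × ℕ → Prop :=
    fun i => i.1 + i.2.1 = q ∧ i.2.2.1 + i.2.2.2 = p + 1 with hPB
  have hx' : x ∈ ⨆ i, ⨆ _ : Px i, C' i := by rw [← hsup]; exact hx
  have hB' : B ∈ ⨆ i, ⨆ _ : PB i, C' i := by rw [← hsup]; exact hB
  set D0 : Submodule ℂ V := ⨆ i, ⨆ _ : (fun j : ℕ × ℕ × ℕ × ℕ => j.2.1 = 0) i, C' i with hD0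
  set D1 : Submodule ℂ V := ⨆ i, ⨆ _ : (fun j : ℕ × ℕ × ℕ × ℕ => j.2.1 ≠ 0) i, C' i with hD1
  -- generic mapping fact
  have key : ∀ (f : V →ₗ[ℂ] V) (P : ℕ × ℕ × ℕ × ℕ → Prop) (T : Submodule ℂ V),
      (∀ i, P i → (C' i).map f ≤ T) → ∀ v, v ∈ (⨆ i, ⨆ _ : P i, C' i) → f v ∈ T := by
    intro f P T h v hv
    have hle : Submodule.map f (⨆ i, ⨆ _ : P i, C' i) ≤ T := by
      rw [Submodule.map_iSup]
      refine iSup_le fun i => ?_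
      rw [Submodule.map_iSup]
      exact iSup_le fun hi => h i hi
    exact hle ⟨v, hv, rfl⟩
  -- split B into b = 0 and b ≠ 0 parts
  have hsplit : (⨆ i, ⨆ _ : PB i, C' i)
      = (⨆ i, ⨆ _ : PB i ∧ i.2.1 = 0, C' i) ⊔ (⨆ i, ⨆ _ : PB i ∧ i.2.1 ≠ 0, C' i) := by
    apply le_antisymm
    · refine iSup₂_le fun i hi => ?_
      by_cases h : i.2.1 = 0
      · exact le_trans (le_iSup₂ (f := fun i (_ : PB i ∧ i.2.1 = 0) => C' i) i ⟨hi, h⟩)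
          le_sup_left
      · exact le_trans (le_iSup₂ (f := fun i (_ : PB i ∧ i.2.1 ≠ 0) => C' i) i ⟨hi, h⟩)
          le_sup_right
    · refine sup_le (iSup₂_le fun i hi => ?_) (iSup₂_le fun i hi => ?_) <;>
        exact le_iSup₂ (f := fun i (_ : PB i) => C' i) i hi.1
  rw [hsplit] at hB'
  obtain ⟨B0, hB0, B1, hB1, rfl⟩ := Submodule.mem_sup.mp hB'
  -- db B1 ∈ D1
  have hdbB1 : db B1 ∈ D1 := by
    refine key db _ D1 ?_ B1 hB1
    rintro ⟨a, b, k, l⟩ ⟨-, hb⟩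
    rcases b with - | - | b
    · exact absurd rfl hb
    · rcases k with - | k
      · rw [show C' (a, 1, 0, l) = C a 1 0 l from rfl, hdb0]
        exact bot_le
      · exact le_trans (hdb a 1 k l)
          (le_iSup₂ (f := fun i (_ : i.2.1 ≠ 0) => C' i) (a+1, 1, k, l+1) one_ne_zero)
    · rw [show C' (a, b+2, k, l) = C a (b+2) k l from rfl,
        hvan a (b+2) k l (Or.inl (by omega)), Submodule.map_bot]
      exact bot_le
  -- db B0 ∈ D0
  have hdbB0 : db B0 ∈ D0 := by
    refine key db _ D0 ?_ B0 hB0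
    rintro ⟨a, b, k, l⟩ ⟨-, hb⟩
    subst hb
    rcases k with - | k
    · rw [show C' (a, 0, 0, l) = C a 0 0 l from rfl, hdb0]
      exact bot_le
    · exact le_trans (hdb a 0 k l)
        (le_iSup₂ (f := fun i (_ : i.2.1 = 0) => C' i) (a+1, 0, k, l+1) rfl)
  -- A1 x, A2 x ∈ D0
  have hA1x : A1 x ∈ D0 := by
    refine key A1 Px D0 ?_ x hx'
    rintro ⟨a, b, k, l⟩ -
    rcases b with - | - | b
    · rw [show C' (a, 0, k, l) = C a 0 k l from rfl, hA10]; exact bot_le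
    · exact le_trans (hA1 a 0 k l)
        (le_iSup₂ (f := fun i (_ : i.2.1 = 0) => C' i) (a+1, 0, k, l+1) rfl)
    · rw [show C' (a, b+2, k, l) = C a (b+2) k l from rfl,
        hvan a (b+2) k l (Or.inl (by omega)), Submodule.map_bot]
      exact bot_le
  have hA2x : A2 x ∈ D0 := by
    refine key A2 Px D0 ?_ x hx'
    rintro ⟨a, b, k, l⟩ -
    rcases b with - | - | b
    · rw [show C' (a, 0, k, l) = C a 0 k l from rfl, hA20]; exact bot_le
    · exact le_trans (hA2 a 0 k l)
        (le_iSup₂ (f := fun i (_ : i.2.1 = 0) => C' i) (a+1, 0, k+1, l) rfl)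
    · rw [show C' (a, b+2, k, l) = C a (b+2) k l from rfl,
        hvan a (b+2) k l (Or.inl (by omega)), Submodule.map_bot]
      exact bot_le
  -- db B1 ∈ D0 as well
  have hdbB1' : db B1 ∈ D0 := by
    have : db B1 = (A1 x + A2 x) - db B0 := by
      rw [hadB, map_add]; abel
    rw [this]
    exact D0.sub_mem (D0.add_mem hA1x hA2x) hdbB0
  -- disjointness kills db B1
  have hdisj : Disjoint D0 D1 :=
    aux_disjoint_biSup C' hind _ _ (fun i h => h.2 h.1)
  have hdbB1z : db B1 = 0 := Submodule.disjoint_def.mp hdisj _ hdbB1' hdbB1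
  -- conclude with B' = B0
  refine ⟨B0, ?_, ?_, ?_⟩
  · rw [hsup PB]
    exact (iSup₂_le fun i hi =>
      le_iSup₂ (f := fun i (_ : PB i) => C' i) i hi.1) hB0
  · rw [hadB, map_add, hdbB1z, add_zero]
  · have h1 : A1 B0 ∈ (⊥ : Submodule ℂ V) := by
      refine key A1 _ ⊥ ?_ B0 hB0
      rintro ⟨a, b, k, l⟩ ⟨-, hb⟩
      subst hb
      rw [show C' (a, 0, k, l) = C a 0 k l from rfl, hA10]
    have h2 : A2 B0 ∈ (⊥ : Submodule ℂ V) := by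
      refine key A2 _ ⊥ ?_ B0 hB0
      rintro ⟨a, b, k, l⟩ ⟨-, hb⟩
      subst hb
      rw [show C' (a, 0, k, l) = C a 0 k l from rfl, hA20]
    rw [Submodule.mem_bot] at h1 h2
    rw [h1, h2, add_zero]
end
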